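/- Let G be a finite group of exponent e, n a positive integer, and d = gcd(n, e). Then for every u ∈ G, G_n(u) = G_d(u), where G_m(u) = {a ∈ G | (a·u⁻¹)ᵐ = aᵐ}. -/
import Mathlib


theorem stmt_2 {G : Type*} [Group G] [Finite G] (n : ℕ) (hn : 0 < n) (u : G) :
    {a : G | (a * u⁻¹) ^ n = a ^ n} =
      {a : G | (a * u⁻¹) ^ (n.gcd (Monoid.exponent G)) = a ^ (n.gcd (Monoid.exponent G))} := by
  set e := Monoid.exponent G with he
  have key : ∀ g : G, g ^ (n.gcd e) = (g ^ n) ^ (Nat.gcdA n e) := by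
    intro g
    have h1 : ((n.gcd e : ℤ)) = n * Nat.gcdA n e + e * Nat.gcdB n e := Nat.gcd_eq_gcd_ab n e
    have hE : g ^ (e : ℤ) = 1 := by
      rw [zpow_natCast, he, Monoid.pow_exponent_eq_one]
    calc g ^ (n.gcd e) = g ^ ((n.gcd e : ℤ)) := by rw [zpow_natCast]
      _ = (g ^ (n : ℤ)) ^ Nat.gcdA n e * (g ^ (e : ℤ)) ^ Nat.gcdB n e := by
          rw [h1, zpow_add, zpow_mul, zpow_mul]
      _ = (g ^ n) ^ Nat.gcdA n e := by rw [hE, one_zpow, mul_one, zpow_natCast]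
  ext a
  simp only [Set.mem_setOf_eq]
  constructor
  · intro h
    rw [key, key, h]
  · intro h
    obtain ⟨k, hk⟩ := Nat.gcd_dvd_left n e
    rw [hk, pow_mul, pow_mul, h]
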